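/- Let f : X → Y be a function of metric spaces, k ≥ m+1 ≥ 1, and let D_f : (0,∞) × (0,∞) → (0,∞) be an (m,k)-dimensional control function of f. Then for all r_X, r_Y, R_Y > 0 and every subset B ⊆ Y whose r_Y-components are R_Y-bounded, the set f⁻¹(B) can be covered by k sets each of whose (r_X, r_Y)-components are (D_f(r_X, R_Y), D_f(r_X, R_Y))-bounded in the X-coordinate, i.e. each (r_X,r_Y)-component has diameter at most D_f(r_X, R_Y) in X, and every element of f⁻¹(B) belongs to at least k−m of the k covering sets. -/
import Mathlib


open Metric Set

/-- The chain relation generating `r`-components of a subset `A`. -/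
def ChainRel {X : Type*} [MetricSpace X] (A : Set X) (r : ℝ) : X → X → Prop :=
  Relation.ReflTransGen (fun a b => b ∈ A ∧ dist a b ≤ r)

/-- The `r`-components of `A` are `R`-bounded. -/
def CompBounded {X : Type*} [MetricSpace X] (A : Set X) (r R : ℝ) : Prop :=
  ∀ x ∈ A, ∀ y ∈ A, ChainRel A r x y → dist x y ≤ R

/-- The image `f '' A` has diameter at most `RY`. -/
def ImDiamLE {X Y : Type*} [MetricSpace X] [MetricSpace Y] (f : X → Y) (A : Set X)
    (RY : ℝ) : Prop :=
  ∀ x ∈ A, ∀ y ∈ A, dist (f x) (f y) ≤ RY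

/-- `D` is an `(m,k)`-dimensional control function of `f : X → Y`: for all `rX, RY > 0`,
every subset `A ⊆ X` whose image has diameter at most `RY` is the union of `k` sets
whose `rX`-components are `D rX RY`-bounded, such that every point of `A` belongs to at
least `k - m` of the `k` sets. An `m`-dimensional control function of `f` is the case
`k = m + 1`. -/
def IsFnNKControl {X Y : Type*} [MetricSpace X] [MetricSpace Y] (f : X → Y) (m k : ℕ)
    (D : ℝ → ℝ → ℝ) : Prop :=
  ∀ rX > 0, ∀ RY > 0, ∀ A : Set X, ImDiamLE f A RY →
    ∃ C : Fin k → Set X,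
      (∀ i, C i ⊆ A) ∧ A ⊆ (⋃ i, C i) ∧
      (∀ i, CompBounded (C i) rX (D rX RY)) ∧
      ∀ x ∈ A, k - m ≤ {i : Fin k | x ∈ C i}.ncard

/-- The chain relation generating the `(rX, rY)`-components (with respect to `f`) of a
subset `A` of `X`. -/
def FChainRel {X Y : Type*} [MetricSpace X] [MetricSpace Y] (f : X → Y) (A : Set X)
    (rX rY : ℝ) : X → X → Prop :=
  Relation.ReflTransGen (fun a b => b ∈ A ∧ dist a b ≤ rX ∧ dist (f a) (f b) ≤ rY)

/-- If `D` is an `(m,k)`-dimensional control function of `f` and `B ⊆ Y` has its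
`rY`-components `RY`-bounded, then `f ⁻¹' B` can be covered by `k` sets whose
`(rX, rY)`-components have diameter at most `D rX RY` in `X`, with every point of
`f ⁻¹' B` belonging to at least `k - m` of the `k` sets. -/

lemma chain_mem' {X : Type*} [MetricSpace X] {A : Set X} {r : ℝ} {x y : X}
    (hx : x ∈ A) (h : ChainRel A r x y) : y ∈ A := by
  induction h with
  | refl => exact hx
  | tail _ h2 _ => exact h2.1

lemma chain_symm' {X : Type*} [MetricSpace X] {A : Set X} {r : ℝ} {x y : X}
    (hx : x ∈ A) (h : ChainRel A r x y) : ChainRel A r y x := by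
  induction h with
  | refl => exact Relation.ReflTransGen.refl
  | tail h1 h2 ih =>
      exact Relation.ReflTransGen.head
        ⟨chain_mem' hx h1, by rw [dist_comm]; exact h2.2⟩ ih

theorem stmt12 {X Y : Type*} [MetricSpace X] [MetricSpace Y] (f : X → Y) (m k : ℕ)
    (hk : m + 1 ≤ k) (D : ℝ → ℝ → ℝ) (hD : IsFnNKControl f m k D)
    (rX rY RY : ℝ) (hrX : 0 < rX) (hrY : 0 < rY) (hRY : 0 < RY)
    (B : Set Y) (hB : CompBounded B rY RY) :
    ∃ C : Fin k → Set X,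
      (∀ i, C i ⊆ f ⁻¹' B) ∧ (f ⁻¹' B ⊆ ⋃ i, C i) ∧
      (∀ i, ∀ x ∈ C i, ∀ y ∈ C i, FChainRel f (C i) rX rY x y → dist x y ≤ D rX RY) ∧
      ∀ x ∈ f ⁻¹' B, k - m ≤ {i : Fin k | x ∈ C i}.ncard := by
  classical
  set comp : Y → Set Y := fun z => {y | y ∈ B ∧ ChainRel B rY z y} with hcompdef
  have hdiam : ∀ z ∈ B, ImDiamLE f (f ⁻¹' comp z) RY := by
    intro z hz x hx y hy
    exact hB _ hx.1 _ hy.1 ((chain_symm' hz hx.2).trans hy.2)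
  set g : Set Y → Fin k → Set X := fun S =>
    if h : ImDiamLE f (f ⁻¹' S) RY then (hD rX hrX RY hRY _ h).choose
    else fun _ => ∅ with hgdef
  have hgspec : ∀ S : Set Y, ImDiamLE f (f ⁻¹' S) RY →
      (∀ i, g S i ⊆ f ⁻¹' S) ∧ f ⁻¹' S ⊆ (⋃ i, g S i) ∧
      (∀ i, CompBounded (g S i) rX (D rX RY)) ∧
      ∀ x ∈ f ⁻¹' S, k - m ≤ {i : Fin k | x ∈ g S i}.ncard := by
    intro S h
    simp only [hgdef, dif_pos h]
    exact (hD rX hrX RY hRY _ h).choose_spec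
  have hcomp_eq : ∀ z ∈ B, ∀ z' ∈ B, ∀ w, ChainRel B rY z w → ChainRel B rY z' w →
      comp z = comp z' := by
    intro z hz z' hz' w h h'
    ext y
    simp only [hcompdef, mem_setOf_eq]
    constructor
    · rintro ⟨hyB, hch⟩
      exact ⟨hyB, (h'.trans (chain_symm' hz h)).trans hch⟩
    · rintro ⟨hyB, hch⟩
      exact ⟨hyB, (h.trans (chain_symm' hz' h')).trans hch⟩
  refine ⟨fun i => ⋃ z ∈ B, g (comp z) i, ?_, ?_, ?_, ?_⟩
  · intro i x hx
    obtain ⟨z, hz, hxg⟩ := mem_iUnion₂.1 hx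
    exact ((hgspec _ (hdiam z hz)).1 i hxg).1
  · intro x hx
    have hfx : f x ∈ B := hx
    have hxc : x ∈ f ⁻¹' comp (f x) := ⟨hfx, Relation.ReflTransGen.refl⟩
    obtain ⟨i, hi⟩ := mem_iUnion.1 ((hgspec _ (hdiam _ hfx)).2.1 hxc)
    exact mem_iUnion.2 ⟨i, mem_iUnion₂.2 ⟨f x, hfx, hi⟩⟩
  · intro i x hx y hy hchain
    -- normalize membership: any point of C i lies in g (comp (f ·)) i
    have hnorm : ∀ w, w ∈ (⋃ z ∈ B, g (comp z) i) →
        f w ∈ B ∧ w ∈ g (comp (f w)) i := by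
      intro w hw
      obtain ⟨z, hz, hwg⟩ := mem_iUnion₂.1 hw
      have hwA : w ∈ f ⁻¹' comp z := (hgspec _ (hdiam z hz)).1 i hwg
      have hfwB : f w ∈ B := hwA.1
      have : comp z = comp (f w) :=
        hcomp_eq z hz (f w) hfwB (f w) hwA.2 Relation.ReflTransGen.refl
      exact ⟨hfwB, this ▸ hwg⟩
    obtain ⟨hfxB, hxg⟩ := hnorm x hx
    have key : ∀ p, FChainRel f (⋃ z ∈ B, g (comp z) i) rX rY x p →
        p ∈ g (comp (f x)) i ∧ ChainRel (g (comp (f x)) i) rX x p := by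
      intro p hp
      induction hp with
      | refl => exact ⟨hxg, Relation.ReflTransGen.refl⟩
      | tail h1 h2 ih =>
          obtain ⟨hbG, hchb⟩ := ih
          obtain ⟨hfcB, hcg⟩ := hnorm _ h2.1
          have hbA : _ ∈ f ⁻¹' comp (f x) := (hgspec _ (hdiam _ hfxB)).1 i hbG
          have hchY : ChainRel B rY (f x) (f _) := hbA.2.tail ⟨hfcB, h2.2.2⟩
          have hce : comp (f _) = comp (f x) :=
            hcomp_eq _ hfcB (f x) hfxB _ Relation.ReflTransGen.refl hchY
          have hcG : _ ∈ g (comp (f x)) i := hce ▸ hcg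
          exact ⟨hcG, hchb.tail ⟨hcG, h2.2.1⟩⟩
    obtain ⟨hyg, hch⟩ := key y hchain
    exact (hgspec _ (hdiam _ hfxB)).2.2.1 i x hxg y hyg hch
  · intro x hx
    have hfx : f x ∈ B := hx
    have hxc : x ∈ f ⁻¹' comp (f x) := ⟨hfx, Relation.ReflTransGen.refl⟩
    have h1 := (hgspec _ (hdiam _ hfx)).2.2.2 x hxc
    refine h1.trans (Set.ncard_le_ncard ?_ (Set.toFinite _))
    intro i hi
    exact mem_iUnion₂.2 ⟨f x, hfx, hi⟩
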